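/- Let 0 < μ < L, κ = L/μ, and 0 < Δ < 1. Set h = 1/((4/Δ)(L − μ) + 2L), and let m be a positive integer with m ≥ ((4(κ−1))/Δ + 2κ) · log(2/Δ + (2κ−1)/(κ−1)). Then (1 − μh)^m / ((1 − (1 − μh)^m)(1 − 2Lh)) + 2(L − μ)h/(1 − 2Lh) ≤ Δ. -/

import Mathlib

set_option maxHeartbeats 800000

/-- ν = μ case of Theorem 6 of the S2GD paper: with the stated stepsize `h`
and epoch length `m`, the contraction factor is at most `Δ`. -/
theorem s2gd_parameter_choice_nu_eq_mu
    {L μ κ Δ h : ℝ} (hμ : 0 < μ) (hμL : μ < L) (hκ : κ = L / μ)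
    (hΔ0 : 0 < Δ) (hΔ1 : Δ < 1)
    (hh : h = 1 / ((4 / Δ) * (L - μ) + 2 * L))
    {m : ℕ} (hm1 : 1 ≤ m)
    (hm : ((4 * (κ - 1)) / Δ + 2 * κ) * Real.log (2 / Δ + (2 * κ - 1) / (κ - 1)) ≤ (m : ℝ)) :
    (1 - μ * h) ^ m / ((1 - (1 - μ * h) ^ m) * (1 - 2 * L * h)) +
        2 * (L - μ) * h / (1 - 2 * L * h) ≤ Δ := by
  have hκ1 : 1 < κ := by rw [hκ]; exact (one_lt_div hμ).mpr hμL
  have hκ1' : 0 < κ - 1 := by linarith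
  have hLκ : L = κ * μ := by rw [hκ]; field_simp
  subst hLκ
  have hL : 0 < κ * μ := by positivity
  have hLμ : 0 < κ * μ - μ := by nlinarith
  set A : ℝ := (4 * (κ - 1)) / Δ + 2 * κ with hA
  have h1 : 0 < (4 * (κ - 1)) / Δ := div_pos (by linarith) hΔ0
  have hA2 : 2 < A := by rw [hA]; linarith
  have hA0 : 0 < A := by linarith
  have hD : 0 < (4 / Δ) * (κ * μ - μ) + 2 * (κ * μ) := by positivity
  have hh0 : 0 < h := by rw [hh]; positivity
  have hμh : μ * h = 1 / A := by
    rw [hh, hA, mul_one_div]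
    rw [div_eq_div_iff hD.ne' (by positivity)]
    field_simp
  have h2Lh : 1 - 2 * (κ * μ) * h = (4 / Δ) * (κ * μ - μ) * h := by
    rw [hh]
    field_simp
    ring
  have hc0 : 0 < 1 - 2 * (κ * μ) * h := by rw [h2Lh]; positivity
  have hsecond : 2 * (κ * μ - μ) * h / (1 - 2 * (κ * μ) * h) = Δ / 2 := by
    rw [h2Lh]
    rw [div_eq_div_iff (by positivity) (by norm_num)]
    field_simp
    ring
  have hq0 : 0 ≤ 1 - μ * h := by
    rw [hμh]
    have : 1 / A ≤ 1 := by rw [div_le_one hA0]; linarith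
    linarith
  set R : ℝ := (A + 2 * (κ - 1)) / (2 * (κ - 1)) with hR
  have hR1 : 1 < R := by
    rw [hR, lt_div_iff₀ (by linarith)]; linarith
  have hR0 : 0 < R := by linarith
  have hargR : 2 / Δ + (2 * κ - 1) / (κ - 1) = R := by
    rw [hR, hA]
    field_simp [hΔ0.ne', hκ1'.ne']
    ring
  have hlog : A * Real.log R ≤ m := by rw [← hargR]; exact hm
  set x : ℝ := (1 - μ * h) ^ m with hx
  have hqm : x ≤ 1 / R := by
    have step1 : x ≤ Real.exp (-(μ * h)) ^ m := by
      apply pow_le_pow_left₀ hq0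
      linarith [Real.add_one_le_exp (-(μ * h))]
    have step2 : Real.exp (-(μ * h)) ^ m = Real.exp (-((m : ℝ) * (μ * h))) := by
      rw [← Real.exp_nat_mul]; ring_nf
    have step3 : Real.exp (-((m : ℝ) * (μ * h))) ≤ Real.exp (- Real.log R) := by
      apply Real.exp_le_exp.mpr
      rw [neg_le_neg_iff, hμh, mul_one_div, le_div_iff₀ hA0]
      nlinarith [hlog]
    have step4 : Real.exp (- Real.log R) = 1 / R := by
      rw [Real.exp_neg, Real.exp_log hR0, one_div]
    calc x ≤ Real.exp (-(μ * h)) ^ m := step1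
      _ = Real.exp (-((m : ℝ) * (μ * h))) := step2
      _ ≤ Real.exp (- Real.log R) := step3
      _ = 1 / R := step4
  have hx0 : 0 ≤ x := pow_nonneg hq0 m
  set e : ℝ := 2 * (κ * μ - μ) * h with he
  have he0 : 0 < e := by rw [he]; positivity
  have hkey : e * (R - 1) = 1 := by
    rw [he, hR, hA, hh]
    field_simp [hΔ0.ne', hκ1'.ne', hμ.ne', hD.ne']
    ring
  have heΔ : Δ / 2 * (1 - 2 * (κ * μ) * h) = e := by
    rw [h2Lh, he]
    field_simp [hΔ0.ne']
    ring
  clear_value A R x e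
  clear hμh h2Lh hh hargR hlog hm hA hR hx he
  have hxR : x * R ≤ 1 := by rwa [← le_div_iff₀ hR0]
  have hx1 : x < 1 := by
    have : 1 / R < 1 := by rw [div_lt_one hR0]; exact hR1
    linarith
  have h1x : 0 < 1 - x := by linarith
  have hfirst : x / ((1 - x) * (1 - 2 * (κ * μ) * h)) ≤ Δ / 2 := by
    rw [div_le_iff₀ (by positivity)]
    have h5 : x * (R - 1) ≤ 1 - x := by nlinarith [hxR]
    have h6 : e * (x * (R - 1)) ≤ e * (1 - x) :=
      mul_le_mul_of_nonneg_left h5 he0.le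
    have h7 : e * (x * (R - 1)) = x * (e * (R - 1)) := by ring
    rw [h7, hkey, mul_one] at h6
    have h8 : Δ / 2 * ((1 - x) * (1 - 2 * (κ * μ) * h)) = e * (1 - x) := by
      rw [← heΔ]; ring
    linarith [h6, h8.ge]
  linarith [hfirst, hsecond.le]
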